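/- Suppose the behavior policy is uniform, μ(a|x) = 1/K for all (x,a) where K = |A|. Fix ā ∈ A, let V(π_ā) = Σ_x d0(x)R(x,ā) be the value of the constant policy that always selects ā, and assume 0 < V(π_ā) < 1. For f : X × A → [0,1], let V_f(π_ā) = Σ_x d0(x)f(x,ā) and Cov_{π_ā}(f,R) = Σ_x d0(x)·(f(x,ā) − V_f(π_ā))·(R(x,ā) − V(π_ā)). Then f_{ā,1} − f_{ā,0} = Cov_{π_ā}(f,R) / (V(π_ā)·(1 − V(π_ā))), and consequently |f_{ā,1} − f_{ā,0}| ≥ 4·|Cov_{π_ā}(f,R)|. -/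

import Mathlib

open Finset

variable {X A Y : Type*} [Fintype X] [Fintype A] [Fintype Y]

/-- `d^μ_a = Σ_x d0(x) μ(a|x)` -/
noncomputable def dmu (d0 : X → ℝ) (μ : X → A → ℝ) (a : A) : ℝ :=
  ∑ x, d0 x * μ x a

/-- `ρ^μ_a = (1/d^μ_a) Σ_x d0(x) μ(a|x) R(x,a)` -/
noncomputable def rho (d0 : X → ℝ) (μ : X → A → ℝ) (R : X → A → ℝ) (a : A) : ℝ :=
  (∑ x, d0 x * μ x a * R x a) / dmu d0 μ a

/-- `f_{a,1}` -/
noncomputable def fa1 (d0 : X → ℝ) (μ : X → A → ℝ) (R : X → A → ℝ) (a : A)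
    (f : X → A → ℝ) : ℝ :=
  (∑ x, d0 x * μ x a * R x a * f x a) / (dmu d0 μ a * rho d0 μ R a)

/-- `f_{a,0}` -/
noncomputable def fa0 (d0 : X → ℝ) (μ : X → A → ℝ) (R : X → A → ℝ) (a : A)
    (f : X → A → ℝ) : ℝ :=
  (∑ x, d0 x * μ x a * (1 - R x a) * f x a) / (dmu d0 μ a * (1 - rho d0 μ R a))

/-- `ψ_{a,r} = Σ_y P(y|a,r) ψ(y,a)` (`r : Bool`) -/
noncomputable def psir (P : A → Bool → Y → ℝ) (a : A) (r : Bool) (ψ : Y → A → ℝ) : ℝ :=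
  ∑ y, P a r y * ψ y a

/-- `E_{μ_a}[g(x,y)]` under context conditional independence: conditioned on `(x,a)`,
`y` is drawn from the mixture `(1 - R(x,a))·P(·|a,0) + R(x,a)·P(·|a,1)`. -/
noncomputable def Emu (d0 : X → ℝ) (μ : X → A → ℝ) (R : X → A → ℝ)
    (P : A → Bool → Y → ℝ) (a : A) (g : X → Y → ℝ) : ℝ :=
  (1 / dmu d0 μ a) * ∑ x, ∑ y,
    d0 x * μ x a * ((1 - R x a) * P a false y + R x a * P a true y) * g x y

/-- `E_{μ̃_a}[g(x̃,ỹ)]`, where `μ̃_a` is the product of the x-marginal and the y-marginal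
of `μ_a`. -/
noncomputable def Etilde (d0 : X → ℝ) (μ : X → A → ℝ) (R : X → A → ℝ)
    (P : A → Bool → Y → ℝ) (a : A) (g : X → Y → ℝ) : ℝ :=
  ∑ x, ∑ y, (d0 x * μ x a / dmu d0 μ a) *
    (∑ x', (d0 x' * μ x' a / dmu d0 μ a) *
      ((1 - R x' a) * P a false y + R x' a * P a true y)) * g x y

/-- The contrastive objective `L_a(f,ψ)`. -/
noncomputable def La (d0 : X → ℝ) (μ : X → A → ℝ) (R : X → A → ℝ)
    (P : A → Bool → Y → ℝ) (a : A) (f : X → A → ℝ) (ψ : Y → A → ℝ) : ℝ :=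
  Emu d0 μ R P a (fun x y => (f x a - ψ y a) ^ 2)
    - Etilde d0 μ R P a (fun x y => (f x a - ψ y a) ^ 2)

/-- under the uniform behavior policy `μ(a|x) = 1/K`,
`f_{ā,1} − f_{ā,0} = Cov_{π_ā}(f,R) / (V(π_ā)·(1 − V(π_ā)))`, and consequently
`|f_{ā,1} − f_{ā,0}| ≥ 4·|Cov_{π_ā}(f,R)|`. -/
theorem statement7
    (d0 : X → ℝ) (R : X → A → ℝ) (abar : A)
    (hd0 : ∀ x, 0 ≤ d0 x) (hd0sum : ∑ x, d0 x = 1)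
    (hR : ∀ x a', R x a' ∈ Set.Icc (0:ℝ) 1)
    (f : X → A → ℝ) (hf : ∀ x a', f x a' ∈ Set.Icc (0:ℝ) 1)
    (hV0 : 0 < ∑ x, d0 x * R x abar) (hV1 : ∑ x, d0 x * R x abar < 1) :
    let μ : X → A → ℝ := fun _ _ => 1 / (Fintype.card A : ℝ)
    let V : ℝ := ∑ x, d0 x * R x abar
    let Vf : ℝ := ∑ x, d0 x * f x abar
    let Cov : ℝ := ∑ x, d0 x * (f x abar - Vf) * (R x abar - V)
    fa1 d0 μ R abar f - fa0 d0 μ R abar f = Cov / (V * (1 - V)) ∧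
      4 * |Cov| ≤ |fa1 d0 μ R abar f - fa0 d0 μ R abar f| := by
  intro μ V Vf Cov
  have hA : Nonempty A := ⟨abar⟩
  have hK : (0:ℝ) < (Fintype.card A : ℝ) := by
    exact_mod_cast Fintype.card_pos
  set K : ℝ := (Fintype.card A : ℝ) with hKdef
  have hKne : K ≠ 0 := ne_of_gt hK
  have hdmu : dmu d0 μ abar = 1 / K := by
    simp only [dmu, μ, ← Finset.sum_mul, hd0sum, one_mul]; rfl
  have hV0' : V ≠ 0 := ne_of_gt hV0
  have hV1' : (1 - V) ≠ 0 := by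
    have : V < 1 := hV1
    linarith
  have hrho : rho d0 μ R abar = V := by
    have h1 : (∑ x, d0 x * μ x abar * R x abar) = (1/K) * V := by
      simp only [μ, V, Finset.mul_sum]
      congr 1; ext x; ring
    rw [rho, h1, hdmu]
    field_simp
  have hfa1 : fa1 d0 μ R abar f = (∑ x, d0 x * R x abar * f x abar) / V := by
    have h1 : (∑ x, d0 x * μ x abar * R x abar * f x abar)
        = (1/K) * (∑ x, d0 x * R x abar * f x abar) := by
      simp only [μ, Finset.mul_sum]; congr 1; ext x; ring
    rw [fa1, h1, hdmu, hrho]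
    rw [div_eq_div_iff (mul_ne_zero (one_div_ne_zero hKne) hV0') hV0']
    ring
  have hfa0 : fa0 d0 μ R abar f = (∑ x, d0 x * (1 - R x abar) * f x abar) / (1 - V) := by
    have h1 : (∑ x, d0 x * μ x abar * (1 - R x abar) * f x abar)
        = (1/K) * (∑ x, d0 x * (1 - R x abar) * f x abar) := by
      simp only [μ, Finset.mul_sum]; congr 1; ext x; ring
    rw [fa0, h1, hdmu, hrho]
    rw [div_eq_div_iff]
    · ring
    · have : (1:ℝ)/K * (1 - V) ≠ 0 := mul_ne_zero (by positivity) hV1'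
      rcases (mul_ne_zero_iff.mp this) with ⟨h, h'⟩
      exact mul_ne_zero h h'
    · exact hV1'
  have hS0 : (∑ x, d0 x * (1 - R x abar) * f x abar)
      = Vf - ∑ x, d0 x * R x abar * f x abar := by
    simp only [Vf, ← Finset.sum_sub_distrib]
    congr 1; ext x; ring
  have hCov : Cov = (∑ x, d0 x * R x abar * f x abar) - V * Vf := by
    have : Cov = (∑ x, (d0 x * R x abar * f x abar
        - Vf * (d0 x * R x abar) - V * (d0 x * f x abar) + V * Vf * d0 x)) := by
      simp only [Cov]; congr 1; ext x; ring
    rw [this]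
    simp only [Finset.sum_add_distrib, Finset.sum_sub_distrib, ← Finset.mul_sum]
    simp only [hd0sum, mul_one]
    have hVs : (∑ x, d0 x * R x abar) = V := rfl
    have hVfs : (∑ x, d0 x * f x abar) = Vf := rfl
    rw [hVs, hVfs]; ring
  have heq : fa1 d0 μ R abar f - fa0 d0 μ R abar f = Cov / (V * (1 - V)) := by
    rw [hfa1, hfa0, hS0, hCov]
    field_simp
    ring
  refine ⟨heq, ?_⟩
  rw [heq, abs_div]
  have hVpos : 0 < V * (1 - V) := mul_pos hV0 (by linarith [hV1])
  rw [abs_of_pos hVpos]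
  have hquart : V * (1 - V) ≤ 1 / 4 := by nlinarith [sq_nonneg (V - 1/2)]
  calc 4 * |Cov| = |Cov| / (1/4) := by ring
    _ ≤ |Cov| / (V * (1 - V)) := by
        apply div_le_div_of_nonneg_left (abs_nonneg _) hVpos hquart
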